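/- Let V be a partial order viewed as a category, ♭ : V → V monotone with ♭(v) ≤ v and ♭(♭(v)) = ♭(v), and J the quantization Grothendieck topology on V. Let R : V^op ⥤ Type be a J-sheaf and S a subpresheaf of R. Then S (regarded as a presheaf, with restriction maps induced from R) is a J-sheaf if and only if S is closed, i.e. S̄ = S, where S̄ is the ♭-closure of S in R: S̄(v) = { q ∈ R(v) | R(♭(v) ⟶ v)(q) ∈ S(♭(v)) }. -/

import Mathlib

open CategoryTheory

/-- The quantization Grothendieck topology on a partial order `V` induced by a
monotone idempotent deflation `♭ : V → V`: a sieve on `v` covers iff it contains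
the morphism `♭(v) ⟶ v`. -/
def quantTopology {V : Type*} [PartialOrder V] {b : V → V} (hb : Monotone b)
    (hle : ∀ v, b v ≤ v) (hidem : ∀ v, b (b v) = b v) :
    GrothendieckTopology V where
  sieves v := { S | S.arrows (homOfLE (hle v)) }
  top_mem' v := trivial
  pullback_stable' := by
    intro v v' S f hS
    exact S.downward_closed hS (homOfLE (hb (leOfHom f)))
  transitive' := by
    intro v S hS R hR
    have key : ∀ {x y : V} (_ : x = y) (hx : x ≤ v) (hy : y ≤ v),
        R.arrows (homOfLE hx) → R.arrows (homOfLE hy) := by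
      rintro x y rfl hx hy h
      exact h
    exact key (hidem v) ((hle (b v)).trans (hle v)) (hle v) (hR hS)

open Opposite in
/-- A presheaf is a sheaf for the quantization topology iff every restriction map
along `♭(v) ≤ v` is a bijection. -/
lemma quant_isSheaf_iff_bijective
    {V : Type*} [PartialOrder V] {b : V → V} (hb : Monotone b)
    (hle : ∀ v, b v ≤ v) (hidem : ∀ v, b (b v) = b v)
    (P : Vᵒᵖ ⥤ Type*) :
    Presieve.IsSheaf (quantTopology hb hle hidem) P ↔
      ∀ v : V, Function.Bijective (P.map (homOfLE (hle v)).op) := by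
  constructor
  · intro hP v
    -- the sieve of all `w ≤ b v`
    set T : Sieve v :=
      ⟨fun {w} _ => w ≤ b v, fun {w w'} _ hw g => (leOfHom g).trans hw⟩ with hT
    have hTmem : T ∈ (quantTopology hb hle hidem) v := le_rfl
    -- family induced by an element of `P (b v)`
    have mkfam : ∀ q : P.obj (op (b v)),
        ∃ x : Presieve.FamilyOfElements P T.arrows,
          x.Compatible ∧ (∀ {w : V} (g : w ⟶ v) (hg : T.arrows g),
            x g hg = P.map (homOfLE (hg : w ≤ b v)).op q) := by
      intro q
      refine ⟨fun {w} g hg => P.map (homOfLE (hg : w ≤ b v)).op q, ?_, fun g hg => rfl⟩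
      intro Y₁ Y₂ Z g₁ g₂ f₁ f₂ h₁ h₂ _
      dsimp only
      rw [← FunctorToTypes.map_comp_apply, ← FunctorToTypes.map_comp_apply,
        ← op_comp, ← op_comp]
      congr 1
    constructor
    · intro p p' hpp'
      obtain ⟨x, hx, hxval⟩ := mkfam (P.map (homOfLE (hle v)).op p)
      have hamalg : ∀ r : P.obj (op v),
          P.map (homOfLE (hle v)).op r = P.map (homOfLE (hle v)).op p →
          x.IsAmalgamation r := by
        intro r hr w g hg
        rw [hxval g hg, ← hr, ← FunctorToTypes.map_comp_apply, ← op_comp]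
        congr 1
      exact ((hP T hTmem).isSeparatedFor.ext (fun {w} g hg => by
        rw [hamalg p rfl g hg, hamalg p' hpp'.symm g hg]))
    · intro q
      obtain ⟨x, hx, hxval⟩ := mkfam q
      obtain ⟨p, hp, -⟩ := hP T hTmem x hx
      refine ⟨p, ?_⟩
      have := hp (homOfLE (hle v)) (le_refl (b v))
      rw [hxval (homOfLE (hle v)) (le_refl (b v))] at this
      simpa using this
  · intro hbij v T hTmem x hx
    set f := homOfLE (hle v) with hf
    have hfT : T.arrows f := hTmem
    obtain ⟨p, hp⟩ := (hbij v).2 (x f hfT)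
    have hamalg : x.IsAmalgamation p := by
      intro w g hg
      apply (hbij w).1
      have h1 : P.map (homOfLE (hle w)).op (P.map g.op p)
          = P.map (homOfLE (hb (leOfHom g))).op (x f hfT) := by
        rw [← hp, ← FunctorToTypes.map_comp_apply, ← FunctorToTypes.map_comp_apply,
          ← op_comp, ← op_comp]
        congr 1
      rw [h1]
      exact hx (homOfLE (hb (leOfHom g))) (homOfLE (hle w)) hfT hg
        (Subsingleton.elim _ _)
    refine ⟨p, hamalg, ?_⟩
    intro p' hp'
    apply (hbij v).1
    rw [hp, hp' f hfT]

open Opposite in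
/-- Let `R` be a sheaf for the quantization Grothendieck topology
and `S` a subpresheaf of `R`. Then `S` (regarded as a presheaf) is a sheaf iff `S`
is closed for the `♭`-closure in `R`: for all `v`,
`{ q ∈ R(v) | R(♭(v) ⟶ v)(q) ∈ S(♭(v)) } = S(v)`. -/
theorem subpresheaf_isSheaf_iff_closed
    {V : Type*} [PartialOrder V] {b : V → V} (hb : Monotone b)
    (hle : ∀ v, b v ≤ v) (hidem : ∀ v, b (b v) = b v)
    (R : Vᵒᵖ ⥤ Type*)
    (hR : Presieve.IsSheaf (quantTopology hb hle hidem) R)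
    (S : Subfunctor R) :
    Presieve.IsSheaf (quantTopology hb hle hidem) S.toFunctor ↔
      ∀ U : Vᵒᵖ,
        { q : R.obj U |
            R.map (homOfLE (hle U.unop)).op q ∈ S.obj (op (b U.unop)) } = S.obj U := by
  rw [quant_isSheaf_iff_bijective hb hle hidem] at hR ⊢
  constructor
  · intro hS U
    ext q
    constructor
    · intro hq
      obtain ⟨⟨s, hs⟩, hmap⟩ := (hS U.unop).2 ⟨R.map (homOfLE (hle U.unop)).op q, hq⟩
      have h1 : R.map (homOfLE (hle U.unop)).op s = R.map (homOfLE (hle U.unop)).op q := by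
        have := congrArg Subtype.val hmap
        exact this
      have : s = q := by
        have := (hR U.unop).1 (a₁ := R.map (𝟙 U) s) (a₂ := R.map (𝟙 U) q) ?_
        · simpa using this
        · simpa using h1
      exact this ▸ hs
    · intro hq
      exact S.map (homOfLE (hle U.unop)).op hq
  · intro hclosed v
    constructor
    · intro p p' hpp'
      apply Subtype.ext
      apply (hR v).1
      have := congrArg Subtype.val hpp'
      exact this
    · rintro ⟨r, hr⟩
      obtain ⟨q, hq⟩ := (hR v).2 r
      have hqS : q ∈ S.obj (op v) := by
        rw [← hclosed (op v)]
        show R.map (homOfLE (hle v)).op q ∈ S.obj (op (b v))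
        rw [hq]; exact hr
      exact ⟨⟨q, hqS⟩, Subtype.ext hq⟩
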